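/- arXiv:2502.17373 — 2 statements merged into one kernel-verified Lean document; each statement's English description precedes it below -/
import Mathlib

section
/- Let f : ℝⁿ → ℝ be convex and L-smooth (L > 0), let x* be a minimizer of f with f* = f(x*), fix α ∈ (0, 1/L] and r ≥ 3. Define a₀ = 0 and a_k = (k+r−2)/(r−1) for k ≥ 1, and define the Nesterov iterates by x₋₁ = x₀, y_k = x_k + ((k−1)/(k+r−1))·(x_k − x_{k-1}), x_{k+1} = y_k − α∇f(y_k) for k ≥ 0. Set p_k = (a_k − 1)(x_k − x_{k-1}) for k ≥ 1 and p₀ = 0, and define V_k = ‖p_k + x_k − x*‖² + 2α a_k² (f(x_k) − f*). Then V_{k+1} ≤ V_k for all k ≥ 0; i.e., V is a nonincreasing Lyapunov function along the iterates. -/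
open RealInnerProductSpace

lemma line_hasDerivAt {n : ℕ} (f : EuclideanSpace ℝ (Fin n) → ℝ)
    (hf : ContDiff ℝ 1 f) (a v : EuclideanSpace ℝ (Fin n)) (t : ℝ) :
    HasDerivAt (fun s : ℝ => f (a + s • v)) ⟪gradient f (a + t • v), v⟫ t := by
  have hline : HasDerivAt (fun s : ℝ => a + s • v) v t := by
    simpa using (hasDerivAt_id t).smul_const v |>.const_add a
  have hfd : HasFDerivAt f (InnerProductSpace.toDual ℝ _ (gradient f (a + t • v))) (a + t • v) :=
    ((hf.differentiable one_ne_zero) (a + t • v)).hasGradientAt.hasFDerivAt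
  have h := hfd.comp_hasDerivAt t hline
  simp only [InnerProductSpace.toDual_apply_apply] at h
  exact h

lemma descent_lemma {n : ℕ} (f : EuclideanSpace ℝ (Fin n) → ℝ) (L : ℝ) (hL : 0 ≤ L)
    (hf : ContDiff ℝ 1 f) (hlip : ∀ a b, ‖gradient f a - gradient f b‖ ≤ L * ‖a - b‖)
    (a v : EuclideanSpace ℝ (Fin n)) :
    f (a + v) ≤ f a + ⟪gradient f a, v⟫ + L / 2 * ‖v‖ ^ 2 := by
  set g : ℝ → ℝ := fun t => f (a + t • v) - t * ⟪gradient f a, v⟫ - L / 2 * t ^ 2 * ‖v‖ ^ 2 with hg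
  have hderiv : ∀ t : ℝ, HasDerivAt g
      (⟪gradient f (a + t • v), v⟫ - ⟪gradient f a, v⟫ - L * t * ‖v‖ ^ 2) t := by
    intro t
    have h1 := line_hasDerivAt f hf a v t
    have h2 : HasDerivAt (fun s : ℝ => s * ⟪gradient f a, v⟫) ⟪gradient f a, v⟫ t := by
      simpa using (hasDerivAt_id t).mul_const (⟪gradient f a, v⟫)
    have h3 : HasDerivAt (fun s : ℝ => L / 2 * s ^ 2 * ‖v‖ ^ 2) (L * t * ‖v‖ ^ 2) t := by
      have := ((hasDerivAt_pow 2 t).const_mul (L / 2)).mul_const (‖v‖ ^ 2)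
      exact this.congr_deriv (by push_cast; ring)
    exact (h1.sub h2).sub h3
  have hmono : g 1 ≤ g 0 := by
    have hcont : ContinuousOn g (Set.Icc 0 1) := fun t _ => (hderiv t).continuousAt.continuousWithinAt
    have hdiff : ∀ t ∈ interior (Set.Icc (0:ℝ) 1), DifferentiableAt ℝ g t :=
      fun t _ => (hderiv t).differentiableAt
    have hnonpos : ∀ t ∈ interior (Set.Icc (0:ℝ) 1), deriv g t ≤ 0 := by
      intro t ht
      rw [interior_Icc] at ht
      rw [(hderiv t).deriv]
      have hb : ⟪gradient f (a + t • v), v⟫ - ⟪gradient f a, v⟫ ≤ L * t * ‖v‖ ^ 2 := by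
        have h1 : ⟪gradient f (a + t • v) - gradient f a, v⟫ ≤ ‖gradient f (a + t • v) - gradient f a‖ * ‖v‖ :=
          real_inner_le_norm _ _
        have h2 : ‖gradient f (a + t • v) - gradient f a‖ ≤ L * (t * ‖v‖) := by
          have := hlip (a + t • v) a
          simpa [norm_smul, abs_of_pos ht.1, mul_assoc] using this
        have h3 : ‖gradient f (a + t • v) - gradient f a‖ * ‖v‖ ≤ L * (t * ‖v‖) * ‖v‖ :=
          mul_le_mul_of_nonneg_right h2 (norm_nonneg _)
        calc ⟪gradient f (a + t • v), v⟫ - ⟪gradient f a, v⟫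
            = ⟪gradient f (a + t • v) - gradient f a, v⟫ := by rw [inner_sub_left]
          _ ≤ L * (t * ‖v‖) * ‖v‖ := le_trans h1 h3
          _ = L * t * ‖v‖ ^ 2 := by ring
      linarith
    exact antitoneOn_of_deriv_nonpos (convex_Icc 0 1) hcont
      (fun t ht => (hdiff t ht).differentiableWithinAt) (fun t ht => hnonpos t ht)
      (Set.left_mem_Icc.2 zero_le_one) (Set.right_mem_Icc.2 zero_le_one) zero_le_one
  have h0 : g 0 = f a := by simp [hg]
  have h1 : g 1 = f (a + v) - ⟪gradient f a, v⟫ - L / 2 * ‖v‖ ^ 2 := by simp [hg]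
  rw [h0, h1] at hmono
  linarith

set_option maxHeartbeats 1000000 in
/-- The Lyapunov function `V_k = ‖p_k + x_k - x*‖² + 2α a_k² (f(x_k) - f*)` is
nonincreasing along the Nesterov iterates in the general convex case. -/
theorem nesterov_lyapunov_nonincreasing {n : ℕ} (f : EuclideanSpace ℝ (Fin n) → ℝ)
    (L : ℝ) (hL : 0 < L)
    (hsmooth : ContDiff ℝ 1 f)
    (hlip : ∀ a b, ‖gradient f a - gradient f b‖ ≤ L * ‖a - b‖)
    (hconv : ∀ a b, f a + ⟪gradient f a, b - a⟫ ≤ f b)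
    (xs : EuclideanSpace ℝ (Fin n)) (hmin : ∀ z, f xs ≤ f z)
    (α r : ℝ) (hα : 0 < α) (hαL : α ≤ 1 / L) (hr : 3 ≤ r)
    (a : ℕ → ℝ) (ha0 : a 0 = 0)
    (ha : ∀ k : ℕ, 1 ≤ k → a k = ((k : ℝ) + r - 2) / (r - 1))
    (x y : ℕ → EuclideanSpace ℝ (Fin n))
    (hy : ∀ k : ℕ, y k = x k + (((k : ℝ) - 1) / ((k : ℝ) + r - 1)) • (x k - x (k - 1)))
    (hx : ∀ k : ℕ, x (k + 1) = y k - α • gradient f (y k))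
    (p : ℕ → EuclideanSpace ℝ (Fin n)) (hp0 : p 0 = 0)
    (hp : ∀ k : ℕ, 1 ≤ k → p k = (a k - 1) • (x k - x (k - 1)))
    (V : ℕ → ℝ)
    (hV : ∀ k : ℕ, V k = ‖p k + x k - xs‖ ^ 2 + 2 * α * (a k) ^ 2 * (f (x k) - f xs)) :
    ∀ k : ℕ, V (k + 1) ≤ V k := by
  have hr1 : (0:ℝ) < r - 1 := by linarith
  intro k
  set g : EuclideanSpace ℝ (Fin n) := gradient f (y k) with hgdef
  set A : ℝ := a (k + 1) with hAdef
  have hAval : A = ((k : ℝ) + r - 1) / (r - 1) := by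
    rw [hAdef, ha (k+1) (Nat.le_add_left 1 k)]
    push_cast; ring_nf
  have hA1 : 1 ≤ A := by
    rw [hAval, le_div_iff₀ hr1]
    have : (0:ℝ) ≤ (k:ℝ) := Nat.cast_nonneg k
    linarith
  -- key scalar inequality
  have hAak : A * (A - 1) ≤ (a k) ^ 2 := by
    rcases Nat.eq_zero_or_pos k with hk0 | hk1
    · subst hk0
      have : A = 1 := by rw [hAval]; push_cast; field_simp; ring
      rw [this, ha0]; norm_num
    · rw [ha k hk1, hAval]
      have hk1' : (1:ℝ) ≤ (k:ℝ) := by exact_mod_cast hk1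
      have h2 : ((k:ℝ)+r-1)/(r-1) - 1 = ((k:ℝ))/(r-1) := by field_simp; ring
      rw [h2, div_mul_div_comm, div_pow, div_le_div_iff₀ (by positivity) (by positivity)]
      have h3 : ((k:ℝ)+r-1) * (k:ℝ) ≤ ((k:ℝ)+r-2)^2 := by
        nlinarith [mul_nonneg (sub_nonneg.2 hk1') (sub_nonneg.2 hr)]
      have := mul_le_mul_of_nonneg_right h3 (sq_nonneg (r-1))
      nlinarith [this]
  -- key vector identity : p k + x k = A • y k - (A - 1) • x k
  have hkey : p k + x k = A • y k - (A - 1) • x k := by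
    rcases Nat.eq_zero_or_pos k with hk0 | hk1
    · subst hk0
      have hy0 : y 0 = x 0 := by
        rw [hy 0]; norm_num
      rw [hp0, hy0]
      module
    · have hyk : y k = x k + (((k:ℝ) - 1) / ((k:ℝ) + r - 1)) • (x k - x (k-1)) := hy k
      have hkr : (0:ℝ) < (k:ℝ) + r - 1 := by
        have : (0:ℝ) ≤ (k:ℝ) := Nat.cast_nonneg k
        linarith
      have hcoef : A * (((k:ℝ) - 1) / ((k:ℝ) + r - 1)) = a k - 1 := by
        rw [hAval, ha k hk1]
        field_simp
        ring
      rw [hp k hk1, hyk]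
      rw [smul_add, smul_smul, hcoef]
      module
  have hx1 : x (k+1) = y k - α • g := hx k
  -- u and its update
  set u : EuclideanSpace ℝ (Fin n) := p k + x k - xs with hudef
  have hup : p (k+1) + x (k+1) - xs = u - (α * A) • g := by
    have hpk1 : p (k+1) = (A - 1) • (x (k+1) - x k) := by
      simpa using hp (k+1) (Nat.le_add_left 1 k)
    rw [hpk1, hx1, hudef, hkey]
    module
  have hu2 : u = (A - 1) • (y k - x k) + (y k - xs) := by
    rw [hudef, hkey]; module
  -- convexity inequalities
  have hc1 : f (y k) + ⟪g, x k - y k⟫ ≤ f (x k) := hconv (y k) (x k)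
  have hc2 : f (y k) + ⟪g, xs - y k⟫ ≤ f xs := hconv (y k) xs
  -- descent
  have hdesc : f (x (k+1)) ≤ f (y k) - α / 2 * ‖g‖ ^ 2 := by
    have h := descent_lemma f L hL.le hsmooth hlip (y k) (-(α • g))
    have hxy : y k + -(α • g) = x (k+1) := by rw [hx1]; module
    rw [hxy] at h
    have hin : ⟪g, -(α • g)⟫ = -(α * ‖g‖^2) := by
      rw [inner_neg_right, real_inner_smul_right, real_inner_self_eq_norm_sq]
    have hnv : ‖-(α • g)‖ ^ 2 = α^2 * ‖g‖^2 := by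
      rw [norm_neg, norm_smul]
      simp [abs_of_pos hα, mul_pow]
    rw [hin, hnv] at h
    have hLα : L * α ≤ 1 := by
      rw [le_div_iff₀ hL] at hαL; linarith
    nlinarith [sq_nonneg ‖g‖, mul_pos hα hα]
  -- inner product bound
  have hinner : (A - 1) * (f (y k) - f (x k)) + (f (y k) - f xs) ≤ ⟪g, u⟫ := by
    rw [hu2, inner_add_right, real_inner_smul_right]
    have e1 : f (y k) - f (x k) ≤ ⟪g, y k - x k⟫ := by
      have : ⟪g, x k - y k⟫ = -⟪g, y k - x k⟫ := by
        rw [← inner_neg_right]; congr 1; module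
      rw [this] at hc1; linarith
    have e2 : f (y k) - f xs ≤ ⟪g, y k - xs⟫ := by
      have : ⟪g, xs - y k⟫ = -⟪g, y k - xs⟫ := by
        rw [← inner_neg_right]; congr 1; module
      rw [this] at hc2; linarith
    have := mul_le_mul_of_nonneg_left e1 (sub_nonneg.2 hA1)
    linarith
  -- norm expansion
  have hnorm : ‖u - (α * A) • g‖ ^ 2 = ‖u‖^2 - 2 * (α * A) * ⟪g, u⟫ + (α * A)^2 * ‖g‖^2 := by
    rw [norm_sub_sq_real, real_inner_smul_right, norm_smul, real_inner_comm]
    have habs : |α * A| = α * A := abs_of_pos (by nlinarith)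
    rw [Real.norm_eq_abs, habs, mul_pow]
    ring
  have hfk : f xs ≤ f (x k) := hmin (x k)
  have hfy : f xs ≤ f (y k) := hmin (y k)
  -- combine
  rw [hV (k+1), hV k, hup, ← hudef, hnorm]
  have hAα : 0 < α * A := by nlinarith
  have hco : (0:ℝ) ≤ 2*α*A^2 := by positivity
  have key1 : 2 * α * A^2 * (f (x (k+1)) - f xs) ≤ 2 * α * A^2 * (f (y k) - f xs) - (α*A)^2 * ‖g‖^2 :=
    calc 2*α*A^2*(f (x (k+1)) - f xs) ≤ 2*α*A^2*((f (y k) - α/2*‖g‖^2) - f xs) :=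
          mul_le_mul_of_nonneg_left (by linarith) hco
      _ = 2*α*A^2*(f (y k) - f xs) - (α*A)^2*‖g‖^2 := by ring
  have key2 : -(2 * (α*A)) * ⟪g, u⟫ ≤ -(2*(α*A)) * ((A - 1) * (f (y k) - f (x k)) + (f (y k) - f xs)) := by
    have := mul_le_mul_of_nonneg_left hinner (le_of_lt (by linarith : (0:ℝ) < 2*(α*A)))
    linarith
  have key3 : A * (A-1) * (f (x k) - f xs) ≤ (a k)^2 * (f (x k) - f xs) :=
    mul_le_mul_of_nonneg_right hAak (by linarith)
  have key3' : 2*α*(A * (A-1) * (f (x k) - f xs)) ≤ 2*α*((a k)^2 * (f (x k) - f xs)) :=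
    mul_le_mul_of_nonneg_left key3 (by linarith)
  have E : ‖u‖^2 - 2*(α*A)*((A-1)*(f (y k)-f (x k)) + (f (y k)-f xs)) + (α*A)^2*‖g‖^2
      + (2*α*A^2*(f (y k)-f xs) - (α*A)^2*‖g‖^2)
      = ‖u‖^2 + 2*α*(A*(A-1)*(f (x k)-f xs)) := by ring
  nlinarith [key1, key2, key3', E]
end

section
/- Let f : ℝⁿ → ℝ be convex and L-smooth (L > 0), let x* be a minimizer of f with f* = f(x*), fix α ∈ (0, 1/L] and r ≥ 3. Define a₀ = 0, a_k = (k+r−2)/(r−1) for k ≥ 1, the Nesterov iterates x₋₁ = x₀, y_k = x_k + ((k−1)/(k+r−1))·(x_k − x_{k-1}), x_{k+1} = y_k − α∇f(y_k), and p_k = (a_k − 1)(x_k − x_{k-1}) for k ≥ 1, p₀ = 0. Then for every k ≥ 0, ‖p_{k+1} + x_{k+1} − x*‖² ≤ ‖p_k + x_k − x*‖² − 2α a_{k+1}² (f(x_{k+1}) − f*) + 2α a_k² (f(x_k) − f*). -/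
set_option maxHeartbeats 1000000
open RealInnerProductSpace

private lemma descent_lemma_s4 {E : Type*} [NormedAddCommGroup E] [InnerProductSpace ℝ E]
    [CompleteSpace E]
    (f : E → ℝ) (L : ℝ) (hsmooth : ContDiff ℝ 1 f)
    (hlip : ∀ a b, ‖gradient f a - gradient f b‖ ≤ L * ‖a - b‖) (a b : E) :
    f b ≤ f a + ⟪gradient f a, b - a⟫ + L / 2 * ‖b - a‖ ^ 2 := by
  set c : ℝ → E := fun t => a + t • (b - a) with hc
  have hdiff : Differentiable ℝ f := hsmooth.differentiable one_ne_zero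
  have hcd : ∀ t : ℝ, HasDerivAt c (b - a) t := by
    intro t
    simpa [hc] using ((hasDerivAt_id t).smul_const (b - a)).const_add a
  have hg : ∀ t : ℝ, HasDerivAt (fun s => f (c s)) ⟪gradient f (c t), b - a⟫ t := by
    intro t
    have h1 := (hdiff (c t)).hasGradientAt.hasFDerivAt.comp_hasDerivAt t (hcd t)
    simpa [InnerProductSpace.toDual_apply_apply, Function.comp_def] using h1
  have hcc : Continuous c := by fun_prop
  have hgradc : Continuous fun t => gradient f (c t) := by
    have : Continuous fun z => gradient f z := by
      have h1 := hsmooth.continuous_fderiv one_ne_zero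
      exact (InnerProductSpace.toDual ℝ E).symm.continuous.comp h1
    exact this.comp hcc
  have hcont : Continuous fun t => ⟪gradient f (c t), b - a⟫ :=
    hgradc.inner continuous_const
  have key : ∫ t in (0:ℝ)..1, ⟪gradient f (c t), b - a⟫ = f (c 1) - f (c 0) :=
    intervalIntegral.integral_eq_sub_of_hasDerivAt (fun t _ => hg t)
      (hcont.intervalIntegrable 0 1)
  have hc0 : c 0 = a := by simp [hc]
  have hc1 : c 1 = b := by simp [hc]
  have hmono : ∫ t in (0:ℝ)..1, ⟪gradient f (c t), b - a⟫ ≤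
      ∫ t in (0:ℝ)..1, (⟪gradient f a, b - a⟫ + (L * ‖b - a‖ ^ 2) * t) := by
    apply intervalIntegral.integral_mono_on (by norm_num) (hcont.intervalIntegrable 0 1)
      ((continuous_const.add (continuous_const.mul continuous_id')).intervalIntegrable 0 1)
    intro t ht
    have h1 : ⟪gradient f (c t), b - a⟫ - ⟪gradient f a, b - a⟫
        = ⟪gradient f (c t) - gradient f a, b - a⟫ := by rw [inner_sub_left]
    have h2 : ⟪gradient f (c t) - gradient f a, b - a⟫ ≤
        ‖gradient f (c t) - gradient f a‖ * ‖b - a‖ := real_inner_le_norm _ _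
    have h3 : ‖gradient f (c t) - gradient f a‖ ≤ L * ‖c t - a‖ := hlip _ _
    have h4 : ‖c t - a‖ = t * ‖b - a‖ := by
      simp [hc, norm_smul, abs_of_nonneg ht.1]
    rw [h4] at h3
    have h5 : ⟪gradient f (c t), b - a⟫ ≤ ⟪gradient f a, b - a⟫ + L * ‖b - a‖ ^ 2 * t := by
      nlinarith [h2, mul_le_mul_of_nonneg_right h3 (norm_nonneg (b - a)), h1]
    simpa using h5
  have hrhs : ∫ t in (0:ℝ)..1, (⟪gradient f a, b - a⟫ + (L * ‖b - a‖ ^ 2) * t)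
      = ⟪gradient f a, b - a⟫ + L / 2 * ‖b - a‖ ^ 2 := by
    rw [intervalIntegral.integral_add (intervalIntegrable_const)
      ((by fun_prop : Continuous fun t : ℝ => L * ‖b - a‖ ^ 2 * t).intervalIntegrable 0 1),
      intervalIntegral.integral_const_mul]
    simp [integral_id]
    ring
  rw [hc0, hc1] at key
  linarith [hmono.trans_eq hrhs, key.symm.le, key.le]

/-- One-step estimate for Nesterov's method in the general convex case:
`‖p_{k+1} + x_{k+1} - x*‖² ≤ ‖p_k + x_k - x*‖² - 2α a_{k+1}² (f(x_{k+1}) - f*)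
  + 2α a_k² (f(x_k) - f*)`. -/
theorem nesterov_one_step_estimate {n : ℕ} (f : EuclideanSpace ℝ (Fin n) → ℝ)
    (L : ℝ) (hL : 0 < L)
    (hsmooth : ContDiff ℝ 1 f)
    (hlip : ∀ a b, ‖gradient f a - gradient f b‖ ≤ L * ‖a - b‖)
    (hconv : ∀ a b, f a + ⟪gradient f a, b - a⟫ ≤ f b)
    (xs : EuclideanSpace ℝ (Fin n)) (hmin : ∀ z, f xs ≤ f z)
    (α r : ℝ) (hα : 0 < α) (hαL : α ≤ 1 / L) (hr : 3 ≤ r)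
    (a : ℕ → ℝ) (ha0 : a 0 = 0)
    (ha : ∀ k : ℕ, 1 ≤ k → a k = ((k : ℝ) + r - 2) / (r - 1))
    (x y : ℕ → EuclideanSpace ℝ (Fin n))
    (hy : ∀ k : ℕ, y k = x k + (((k : ℝ) - 1) / ((k : ℝ) + r - 1)) • (x k - x (k - 1)))
    (hx : ∀ k : ℕ, x (k + 1) = y k - α • gradient f (y k))
    (p : ℕ → EuclideanSpace ℝ (Fin n)) (hp0 : p 0 = 0)
    (hp : ∀ k : ℕ, 1 ≤ k → p k = (a k - 1) • (x k - x (k - 1))) :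
    ∀ k : ℕ, ‖p (k + 1) + x (k + 1) - xs‖ ^ 2 ≤
      ‖p k + x k - xs‖ ^ 2 - 2 * α * (a (k + 1)) ^ 2 * (f (x (k + 1)) - f xs)
        + 2 * α * (a k) ^ 2 * (f (x k) - f xs) := by
  intro k
  have hr1 : (0:ℝ) < r - 1 := by linarith
  have hkr : (0:ℝ) < (k:ℝ) + r - 1 := by
    have : (0:ℝ) ≤ (k:ℝ) := Nat.cast_nonneg k
    linarith
  set g : EuclideanSpace ℝ (Fin n) := gradient f (y k) with hg
  -- value of a (k+1)
  have hA : a (k + 1) = ((k:ℝ) + r - 1) / (r - 1) := by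
    have h := ha (k + 1) (by omega)
    rw [h]; push_cast; ring_nf
  have hA1 : 1 ≤ a (k + 1) := by
    rw [hA, le_div_iff₀ hr1]
    have : (0:ℝ) ≤ (k:ℝ) := Nat.cast_nonneg k
    linarith
  -- key vector identity: p k + x k = A • y k - (A - 1) • x k
  have hpx : p k + x k = a (k + 1) • y k - (a (k + 1) - 1) • x k := by
    rcases Nat.eq_zero_or_pos k with hk0 | hk1
    · subst hk0
      have hy0 : y 0 = x 0 := by
        have := hy 0
        simpa using this
      rw [hp0, hy0]
      module
    · rw [hp k hk1, hy k, hA, ha k hk1]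
      have hcoef : (((k:ℝ) + r - 2) / (r - 1) - 1)
          = (((k:ℝ) + r - 1) / (r - 1)) * (((k:ℝ) - 1) / ((k:ℝ) + r - 1)) := by
        field_simp
        ring
      rw [hcoef]
      module
  -- v_{k+1} = v_k - (α A) • g
  have hv : p (k + 1) + x (k + 1) - xs
      = (p k + x k - xs) - (α * a (k + 1)) • g := by
    have hpk1 : p (k + 1) = (a (k + 1) - 1) • (x (k + 1) - x k) := by
      have := hp (k + 1) (by omega)
      simpa using this
    rw [hpk1, hx k, ← hg, hpx]
    module
  -- norm expansion
  have hnorm : ‖p (k + 1) + x (k + 1) - xs‖ ^ 2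
      = ‖p k + x k - xs‖ ^ 2 - 2 * (α * a (k + 1)) * ⟪p k + x k - xs, g⟫
        + (α * a (k + 1)) ^ 2 * ‖g‖ ^ 2 := by
    rw [hv, norm_sub_sq_real, real_inner_smul_right, norm_smul, Real.norm_eq_abs,
      mul_pow, sq_abs]
    ring
  -- inner product decomposition
  have hvk : p k + x k - xs = (y k - xs) + (a (k + 1) - 1) • (y k - x k) := by
    rw [hpx]; module
  have hip : ⟪p k + x k - xs, g⟫
      = ⟪g, y k - xs⟫ + (a (k + 1) - 1) * ⟪g, y k - x k⟫ := by
    rw [hvk, inner_add_left, real_inner_smul_left, real_inner_comm (y k - xs),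
      real_inner_comm (y k - x k)]
  -- convexity inequalities
  have h1 : f (y k) - f xs ≤ ⟪g, y k - xs⟫ := by
    have h := hconv (y k) xs
    have : xs - y k = -(y k - xs) := by abel
    rw [this, inner_neg_right] at h
    linarith
  have h2 : f (y k) - f (x k) ≤ ⟪g, y k - x k⟫ := by
    have h := hconv (y k) (x k)
    have : x k - y k = -(y k - x k) := by abel
    rw [this, inner_neg_right] at h
    linarith
  -- descent
  have hdes : f (x (k + 1)) ≤ f (y k) - α / 2 * ‖g‖ ^ 2 := by
    have h := descent_lemma_s4 f L hsmooth hlip (y k) (x (k + 1))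
    have he : x (k + 1) - y k = -(α • g) := by rw [hx k, hg]; abel
    rw [he, inner_neg_right, real_inner_smul_right, ← hg, real_inner_self_eq_norm_sq,
      norm_neg, norm_smul, Real.norm_eq_abs, abs_of_pos hα, mul_pow] at h
    have hαL' : α * L ≤ 1 := by
      rw [le_div_iff₀ hL] at hαL
      exact hαL
    have hS : (0:ℝ) ≤ ‖g‖ ^ 2 := sq_nonneg _
    nlinarith [h, mul_le_mul_of_nonneg_right hαL' (mul_nonneg hα.le hS)]
  -- coefficient inequality
  have hak0 : 0 ≤ a k := by
    rcases Nat.eq_zero_or_pos k with hk0 | hk1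
    · subst hk0; rw [ha0]
    · rw [ha k hk1]
      have hk1' : (1:ℝ) ≤ (k:ℝ) := by exact_mod_cast hk1
      apply div_nonneg <;> linarith
  have hAA : a (k + 1) * (a (k + 1) - 1) ≤ (a k) ^ 2 := by
    rcases Nat.eq_zero_or_pos k with hk0 | hk1
    · subst hk0
      have : a 1 = 1 := by
        rw [ha 1 le_rfl]
        push_cast
        rw [div_eq_one_iff_eq (by linarith : r - 1 ≠ 0)]
        ring
      simp [this, ha0]
    · rw [hA, ha k hk1]
      have hk1' : (1:ℝ) ≤ (k:ℝ) := by exact_mod_cast hk1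
      have hone : ((k:ℝ) + r - 1) / (r - 1) - 1 = (k:ℝ) / (r - 1) := by
        field_simp
        ring
      rw [hone, div_mul_div_comm, div_pow, div_le_div_iff₀ (by positivity) (by positivity)]
      have hpos : 0 ≤ ((k:ℝ) * (r - 3) + (r - 2) ^ 2) * (r - 1) ^ 2 :=
        mul_nonneg (by nlinarith) (sq_nonneg _)
      nlinarith [hpos]
  have hF0 : 0 ≤ f (x k) - f xs := by linarith [hmin (x k)]
  -- assemble
  set A := a (k + 1)
  set S := ‖g‖ ^ 2 with hS
  set P := ⟪g, y k - xs⟫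
  set Q := ⟪g, y k - x k⟫
  set F1 := f (x (k + 1)) - f xs with hF1
  set F0 := f (x k) - f xs with hF0d
  clear_value g A S P Q F1 F0
  have hSnn : (0:ℝ) ≤ S := by rw [hS]; positivity
  have hAnn : (0:ℝ) ≤ A := by linarith
  have e1 : A * F1 ≤ A * (P - α / 2 * S) := by
    have : F1 ≤ P - α / 2 * S := by
      rw [hF1]
      linarith [hdes, h1]
    exact mul_le_mul_of_nonneg_left this hAnn
  have e2 : A * (A - 1) * (F1 - F0) ≤ A * (A - 1) * (Q - α / 2 * S) := by
    have h : F1 - F0 ≤ Q - α / 2 * S := by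
      rw [hF1, hF0d]
      linarith [hdes, h2]
    have hnn : 0 ≤ A * (A - 1) := by nlinarith
    exact mul_le_mul_of_nonneg_left h hnn
  have e3 : A * (A - 1) * F0 ≤ (a k) ^ 2 * F0 := mul_le_mul_of_nonneg_right hAA hF0
  have key : A ^ 2 * F1 - (a k) ^ 2 * F0 ≤ A * P + A * (A - 1) * Q - α / 2 * A ^ 2 * S := by
    nlinarith [e1, e2, e3]
  have key2 := mul_le_mul_of_nonneg_left key (by linarith : (0:ℝ) ≤ 2 * α)
  rw [hnorm, hip]
  linarith [key2]
end
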